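/- Let H be a complex Hilbert space, d a positive integer, and T ∈ B(H) a contraction (i.e. ‖T‖ ≤ 1). Then the d-tuple (T, T², …, T^d) is Toeplitz-contractive. -/

import Mathlib

open scoped ComplexOrder

noncomputable section

variable {H : Type*} [NormedAddCommGroup H] [InnerProductSpace ℂ H] [CompleteSpace H]

/-- The `(i, j)` entry of the `(d+1) × (d+1)` block Toeplitz operator matrix associated to a
`d`-tuple `T` of bounded operators on `H`, with diagonal entries `α • 1`. -/
def tEntry {d : ℕ} (T : Fin d → H →L[ℂ] H) (α : ℂ) (i j : Fin (d + 1)) : H →L[ℂ] H :=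
  if _h1 : (i : ℕ) = (j : ℕ) then α • (1 : H →L[ℂ] H)
  else if _h2 : (j : ℕ) < (i : ℕ) then
    T ⟨(i : ℕ) - (j : ℕ) - 1, by have := i.isLt; omega⟩
  else
    ContinuousLinearMap.adjoint (T ⟨(j : ℕ) - (i : ℕ) - 1, by have := j.isLt; omega⟩)

/-- Positivity of a block operator matrix `M`, expressed through its quadratic form on the
direct sum of copies of `H`: for every vector `x = (x_i)`, `∑ i j, ⟪M i j (x j), x i⟫ ≥ 0`. -/
def IsPosBlockMatrix {ι : Type*} [Fintype ι] (M : ι → ι → (H →L[ℂ] H)) : Prop :=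
  ∀ x : ι → H, 0 ≤ ∑ i, ∑ j, (inner ℂ (M i j (x j)) (x i) : ℂ)

/-- A `d`-tuple of operators is Toeplitz-contractive if its block Toeplitz operator matrix
(with 1's on the diagonal) is a positive operator on `⊕_1^{d+1} H`. -/
def ToeplitzContractive {d : ℕ} (T : Fin d → H →L[ℂ] H) : Prop :=
  IsPosBlockMatrix (tEntry T 1)

/-- If `T` is a contraction on a complex Hilbert space `H` and `d` is a positive
integer, then the `d`-tuple `(T, T², …, T^d)` is Toeplitz-contractive. -/
theorem toeplitzContractive_powers_of_contraction
    (d : ℕ) (hd : 0 < d) (T : H →L[ℂ] H) (hT : ‖T‖ ≤ 1) :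
    ToeplitzContractive (fun k : Fin d => T ^ ((k : ℕ) + 1)) := by
  intro x
  -- extend `x` to ℕ by zero
  set x' : ℕ → H := fun n => if h : n < d + 1 then x ⟨n, h⟩ else 0 with hx'
  -- partial "dilation" sums
  set z : ℕ → H := fun i => ∑ j ∈ Finset.range i, (T ^ (i - j)) (x' j) with hzdef
  set y : ℕ → H := fun i => ∑ j ∈ Finset.range (i + 1), (T ^ (i - j)) (x' j) with hydef
  have hyz : ∀ i, y i = z i + x' i := by
    intro i
    simp only [hydef, hzdef, Finset.sum_range_succ, Nat.sub_self, pow_zero,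
      ContinuousLinearMap.one_apply]
  -- the ℕ-indexed entry function
    
  set t : ℕ → ℕ → ℂ := fun i j =>
    if i = j then inner ℂ (x' i) (x' i)
    else if j < i then inner ℂ ((T ^ (i - j)) (x' j)) (x' i)
    else inner ℂ (x' j) ((T ^ (j - i)) (x' i)) with htdef
  have hentry : ∀ i j : Fin (d + 1),
      (inner ℂ ((tEntry (fun k : Fin d => T ^ ((k : ℕ) + 1)) 1 i j) (x j)) (x i) : ℂ)
        = t (i : ℕ) (j : ℕ) := by
    intro i j
    have hxi : x i = x' (i : ℕ) := by simp [hx', i.isLt]; intro h; have := i.isLt; omega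
    have hxj : x j = x' (j : ℕ) := by simp [hx', j.isLt]; intro h; have := j.isLt; omega
    unfold tEntry
    simp only [htdef]
    split_ifs with h1 h2
    · have : i = j := Fin.ext h1
      subst this
      simp [hxi]
    · have he : (i : ℕ) - (j : ℕ) - 1 + 1 = (i : ℕ) - (j : ℕ) := by omega
      rw [he, hxi, hxj]
    · have he : (j : ℕ) - (i : ℕ) - 1 + 1 = (j : ℕ) - (i : ℕ) := by omega
      rw [he, ContinuousLinearMap.adjoint_inner_left, hxi, hxj]
  -- rewrite the quadratic form as a ℕ-indexed double sum
  rw [show (∑ i, ∑ j, (inner ℂ ((tEntry (fun k : Fin d => T ^ ((k : ℕ) + 1)) 1 i j) (x j)) (x i) : ℂ))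
      = ∑ i ∈ Finset.range (d + 1), ∑ j ∈ Finset.range (d + 1), t i j from by
    rw [← Fin.sum_univ_eq_sum_range (fun i => ∑ j ∈ Finset.range (d + 1), t i j) (d + 1)]
    refine Finset.sum_congr rfl fun i _ => ?_
    rw [← Fin.sum_univ_eq_sum_range (fun j => t i j) (d + 1)]
    exact Finset.sum_congr rfl fun j _ => hentry i j]
  -- split each row sum
  have hrow : ∀ i ∈ Finset.range (d + 1),
      ∑ j ∈ Finset.range (d + 1), t i j
        = ((inner ℂ (x' i) (x' i) : ℂ) + inner ℂ (z i) (x' i))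
            + ∑ j ∈ Finset.Ico (i + 1) (d + 1), t i j := by
    intro i hi
    rw [Finset.range_eq_Ico,
      ← Finset.sum_Ico_consecutive _ (Nat.zero_le (i + 1))
        (by simp at hi; omega : i + 1 ≤ d + 1),
      ← Finset.range_eq_Ico, Finset.sum_range_succ]
    congr 1
    have h1 : ∑ j ∈ Finset.range i, t i j = (inner ℂ (z i) (x' i) : ℂ) := by
      rw [hzdef]
      simp only
      rw [sum_inner]
      refine Finset.sum_congr rfl fun j hj => ?_
      have hj' : j < i := Finset.mem_range.1 hj
      simp only [htdef]
      rw [if_neg (by omega : ¬ i = j), if_pos hj']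
    have h2 : t i i = (inner ℂ (x' i) (x' i) : ℂ) := by simp [htdef]
    rw [h1, h2]
    ring
  rw [Finset.sum_congr rfl hrow, Finset.sum_add_distrib]
  -- swap the upper-triangular part
  have hswap : ∑ i ∈ Finset.range (d + 1), ∑ j ∈ Finset.Ico (i + 1) (d + 1), t i j
      = ∑ i ∈ Finset.range (d + 1), (inner ℂ (x' i) (z i) : ℂ) := by
    rw [Finset.sum_comm' (s' := fun j => Finset.range j) (t' := Finset.range (d + 1))
      (fun i j => by simp [Finset.mem_Ico]; omega)]
    refine Finset.sum_congr rfl fun j hj => ?_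
    rw [hzdef]
    simp only
    rw [inner_sum]
    refine Finset.sum_congr rfl fun i hi => ?_
    have hi' : i < j := Finset.mem_range.1 hi
    simp only [htdef]
    rw [if_neg (by omega : ¬ i = j), if_neg (by omega : ¬ j < i)]
  rw [hswap, ← Finset.sum_add_distrib]
  -- identify each summand as ‖y i‖² - ‖z i‖²
  have hterm : ∀ i, ((inner ℂ (x' i) (x' i) : ℂ) + inner ℂ (z i) (x' i)) + inner ℂ (x' i) (z i)
      = (inner ℂ (y i) (y i) : ℂ) - inner ℂ (z i) (z i) := by
    intro i
    rw [hyz i, inner_add_add_self]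
    ring
  rw [Finset.sum_congr rfl fun i _ => hterm i]
  -- recursion facts for z
  have hz0 : z 0 = 0 := by simp [hzdef]
  have hzsucc : ∀ i, z (i + 1) = T (y i) := by
    intro i
    rw [hzdef, hydef]
    simp only [map_sum]
    refine Finset.sum_congr rfl fun j hj => ?_
    have hj' : j < i + 1 := Finset.mem_range.1 hj
    have he : i + 1 - j = (i - j) + 1 := by omega
    rw [he, pow_succ', ContinuousLinearMap.mul_apply]
  -- contraction bound
  have hnorm : ∀ v : H, ‖T v‖ ≤ ‖v‖ := fun v =>
    (T.le_opNorm v).trans (by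
      calc ‖T‖ * ‖v‖ ≤ 1 * ‖v‖ := mul_le_mul_of_nonneg_right hT (norm_nonneg v)
        _ = ‖v‖ := one_mul _)
  set g : ℕ → ℝ := fun n => Nat.casesOn n 0 (fun m => ‖y m‖ ^ 2) with hgdef
  have hzle : ∀ i, ‖z i‖ ^ 2 ≤ g i := by
    intro i
    cases i with
    | zero => simp [hz0, hgdef]
    | succ m =>
      have : ‖z (m + 1)‖ ≤ ‖y m‖ := by rw [hzsucc m]; exact hnorm _
      calc ‖z (m + 1)‖ ^ 2 ≤ ‖y m‖ ^ 2 := by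
            exact pow_le_pow_left₀ (norm_nonneg _) this 2
        _ = g (m + 1) := rfl
  have hcast : ∀ i : ℕ, (inner ℂ (y i) (y i) : ℂ) - inner ℂ (z i) (z i)
      = ((‖y i‖ ^ 2 - ‖z i‖ ^ 2 : ℝ) : ℂ) := by
    intro i
    rw [inner_self_eq_norm_sq_to_K, inner_self_eq_norm_sq_to_K]
    push_cast
    norm_num [RCLike.ofReal_alg]
  rw [Finset.sum_congr rfl fun i _ => hcast i, ← Complex.ofReal_sum]
  rw [Complex.zero_le_real]
  have hge : ∑ i ∈ Finset.range (d + 1), (‖y i‖ ^ 2 - ‖z i‖ ^ 2)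
      ≥ ∑ i ∈ Finset.range (d + 1), (g (i + 1) - g i) := by
    refine Finset.sum_le_sum fun i _ => ?_
    have h1 : g (i + 1) = ‖y i‖ ^ 2 := rfl
    have h2 : ‖z i‖ ^ 2 ≤ g i := hzle i
    linarith
  have hteles : ∑ i ∈ Finset.range (d + 1), (g (i + 1) - g i) = g (d + 1) - g 0 :=
    Finset.sum_range_sub g (d + 1)
  have : g (d + 1) - g 0 = ‖y d‖ ^ 2 := by simp [hgdef]
  nlinarith [sq_nonneg ‖y d‖]
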